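/- Let ω ∈ Ω be such that T(ω) < +∞. Setting χ = (1/q)·(1,…,1) and, for n ≥ 1, D̃_n(ω) = |ln Λ_n(ω) − ln‖Y^{(n)}(ω) χ‖|, where Λ_n(ω) is the spectral radius of X^{(n)}(ω) (which is strictly positive by the Perron–Frobenius theorem), one has sup_{n≥1} D̃_n(ω) < +∞. -/

import Mathlib

open MeasureTheory ProbabilityTheory Filter Topology Matrix Finset

noncomputable section

namespace StablePaper

/-- The set of `q × q` matrices. -/
abbrev Mat (q : ℕ) := Matrix (Fin q) (Fin q) ℝ

instance {q : ℕ} : MeasurableSpace (Mat q) := MeasurableSpace.pi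

/-- Membership in the semigroup `S`: nonnegative entries, every row and every
column contains a strictly positive entry. -/
def memS {q : ℕ} (g : Mat q) : Prop :=
  (∀ i j, 0 ≤ g i j) ∧ (∀ i, ∃ j, 0 < g i j) ∧ (∀ j, ∃ i, 0 < g i j)

/-- Membership in `S°`: all entries strictly positive. -/
def memS0 {q : ℕ} (g : Mat q) : Prop := ∀ i j, 0 < g i j

/-- The norm `‖x‖ = ∑ i, |x i|` on `ℝ^q`. -/
def nrm {q : ℕ} (x : Fin q → ℝ) : ℝ := ∑ i, |x i|

/-- The cone `C̄` of vectors with nonnegative coordinates. -/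
def inCbar {q : ℕ} (x : Fin q → ℝ) : Prop := ∀ i, 0 ≤ x i

/-- `B̄`: unit vectors of `C̄`. -/
def inBbar {q : ℕ} (x : Fin q → ℝ) : Prop := inCbar x ∧ nrm x = 1

/-- `B`: unit vectors with strictly positive coordinates. -/
def inB {q : ℕ} (x : Fin q → ℝ) : Prop := (∀ i, 0 < x i) ∧ nrm x = 1

/-- The projective action `g · x = gx / ‖gx‖`. -/
def proj {q : ℕ} (g : Mat q) (x : Fin q → ℝ) : Fin q → ℝ :=
  fun i => g.mulVec x i / nrm (g.mulVec x)

/-- `m(x,y) = min { x i / y i : y i > 0 }`. -/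
def mfun {q : ℕ} (x y : Fin q → ℝ) : ℝ :=
  sInf ((fun i => x i / y i) '' {i | 0 < y i})

/-- The distance `d(x,y) = φ(m(x,y) m(y,x))` with `φ(s) = (1-s)/(1+s)`. -/
def dB {q : ℕ} (x y : Fin q → ℝ) : ℝ :=
  (1 - mfun x y * mfun y x) / (1 + mfun x y * mfun y x)

/-- The cocycle `ξ(g,x) = ln ‖gx‖`. -/
def xi {q : ℕ} (g : Mat q) (x : Fin q → ℝ) : ℝ := Real.log (nrm (g.mulVec x))

/-- `X^{(n)} = X_n ⋯ X_1` (with `X^{(0)}` the identity matrix). -/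
def Xprod {q : ℕ} {Ω : Type} (X : ℕ → Ω → Mat q) : ℕ → Ω → Mat q
  | 0 => fun _ => 1
  | n + 1 => fun ω => X (n + 1) ω * Xprod X n ω

/-- `Y^{(n)} = Y_1 ⋯ Y_n` where `Y_k = X_kᵀ`. -/
def Yprod {q : ℕ} {Ω : Type} (X : ℕ → Ω → Mat q) : ℕ → Ω → Mat q
  | 0 => fun _ => 1
  | n + 1 => fun ω => Yprod X n ω * (X (n + 1) ω)ᵀ

/-- `Ỹ^{(n)} = Y_n ⋯ Y_1` where `Y_k = X_kᵀ`. -/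
def Ytil {q : ℕ} {Ω : Type} (X : ℕ → Ω → Mat q) : ℕ → Ω → Mat q
  | 0 => fun _ => 1
  | n + 1 => fun ω => (X (n + 1) ω)ᵀ * Ytil X n ω

/-- The hitting time `T = inf { n ≥ 1 : X^{(n)} ∈ S° }` (equal to `⊤` if no such `n`). -/
def hitT {q : ℕ} {Ω : Type} (X : ℕ → Ω → Mat q) (ω : Ω) : ℕ∞ :=
  ⨅ (n : ℕ) (_ : 1 ≤ n ∧ memS0 (Xprod X n ω)), (n : ℕ∞)

/-- The indicator `1_{[T ≤ n]}`. -/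
def indT {q : ℕ} {Ω : Type} (X : ℕ → Ω → Mat q) (n : ℕ) (ω : Ω) : ℝ :=
  if hitT X ω ≤ (n : ℕ∞) then 1 else 0

/-- Condition (C). -/
def CondC {q : ℕ} {Ω : Type} [MeasurableSpace Ω] (P : Measure Ω)
    (X : ℕ → Ω → Mat q) : Prop :=
  0 < P {ω | ∃ n, 1 ≤ n ∧ memS0 (Xprod X n ω)}

/-- `(X_n)` is an i.i.d. sequence. -/
def IID {q : ℕ} {Ω : Type} [MeasurableSpace Ω] (P : Measure Ω)
    (X : ℕ → Ω → Mat q) : Prop :=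
  (∀ n, Measurable (X n)) ∧
  iIndepFun X P ∧
  ∀ n, Measure.map (X n) P = Measure.map (X 1) P

/-- `N₁`-functional of a matrix: the sum of all entries. -/
def N1fun {q : ℕ} (g : Mat q) : ℝ := ∑ i, ∑ j, g i j

/-- `V₁`-functional of a matrix: the minimal row sum. -/
def V1fun {q : ℕ} (g : Mat q) : ℝ := sInf {r : ℝ | ∃ i, r = ∑ j, g i j}

/-- The spectral radius of a real matrix (via its complex spectrum). -/
def specRad {q : ℕ} (g : Mat q) : ℝ :=
  (spectralRadius ℂ (g.map (algebraMap ℝ ℂ))).toReal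

/-- A slowly varying function `L : (0,∞) → (0,∞)`. -/
def SlowlyVarying (L : ℝ → ℝ) : Prop :=
  (∀ u : ℝ, 0 < u → 0 < L u) ∧
  ∀ l : ℝ, 0 < l → Tendsto (fun u => L (l * u) / L u) atTop (𝓝 1)

/-- Convolution of two measures on `ℝ`. -/
def mconv (ρ₁ ρ₂ : Measure ℝ) : Measure ℝ :=
  Measure.map (fun p : ℝ × ℝ => p.1 + p.2) (ρ₁.prod ρ₂)

/-- `n`-fold convolution power. -/
def convPow (ρ : Measure ℝ) : ℕ → Measure ℝ
  | 0 => Measure.dirac 0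
  | n + 1 => mconv (convPow ρ n) ρ

/-- A stable law of index `α`: a non-Dirac probability measure `ρ` such that for
every `n ≥ 1` there is `d_n ∈ ℝ` with `ρ^{*n}` equal to the image of `ρ` under
`x ↦ n^{1/α} x + d_n`. -/
def IsStableLaw (α : ℝ) (ρ : Measure ℝ) : Prop :=
  IsProbabilityMeasure ρ ∧ (¬ ∃ c : ℝ, ρ = Measure.dirac c) ∧
  ∀ n : ℕ, 1 ≤ n → ∃ d : ℝ,
    convPow ρ n = Measure.map (fun x => (n : ℝ) ^ (1 / α) * x + d) ρ

/-- Convergence in distribution of real random variables to the law `ρ`. -/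
def ConvInDistrib {Ω : Type} [MeasurableSpace Ω] (P : Measure Ω)
    (Z : ℕ → Ω → ℝ) (ρ : Measure ℝ) : Prop :=
  ∀ f : BoundedContinuousFunction ℝ ℝ,
    Tendsto (fun n => ∫ ω, f (Z n ω) ∂P) atTop (𝓝 (∫ x, f x ∂ρ))

/-- `μ^{(n)}`: the law of `Y^{(n)} = Y_1 ⋯ Y_n`. -/
def muN {q : ℕ} {Ω : Type} [MeasurableSpace Ω] (P : Measure Ω)
    (X : ℕ → Ω → Mat q) (n : ℕ) : Measure (Mat q) :=
  Measure.map (fun ω => Yprod X n ω) P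

/-- The contraction coefficient `c(g)`. -/
def cg {q : ℕ} (g : Mat q) : ℝ :=
  sSup {r : ℝ | ∃ x y, inBbar x ∧ inBbar y ∧ x ≠ y ∧
    r = dB (proj g x) (proj g y) / dB x y}

/-- The coefficient `c(μ^{(n)})`. -/
def cmu {q : ℕ} {Ω : Type} [MeasurableSpace Ω] (P : Measure Ω)
    (X : ℕ → Ω → Mat q) (n : ℕ) : ℝ :=
  sSup {r : ℝ | ∃ y y', inBbar y ∧ inBbar y' ∧ y ≠ y' ∧
    r = ∫ g, dB (proj g y) (proj g y') / dB y y' ∂(muN P X n)}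

/-- `κ(μ) = inf_{n ≥ 1} c(μ^{(n)})^{1/n}`. -/
def kappa {q : ℕ} {Ω : Type} [MeasurableSpace Ω] (P : Measure Ω)
    (X : ℕ → Ω → Mat q) : ℝ :=
  sInf {r : ℝ | ∃ n, 1 ≤ n ∧ r = cmu P X n ^ ((n : ℝ)⁻¹)}

/-- `ν` is `μ`-invariant. -/
def MuInvariant {q : ℕ} (μ : Measure (Mat q)) (ν : Measure (Fin q → ℝ)) : Prop :=
  ∀ f : BoundedContinuousFunction (Fin q → ℝ) ℝ,
    ∫ x, (∫ g, f (proj g x) ∂μ) ∂ν = ∫ x, f x ∂ν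

/-- The Fourier kernels `P_t` (so `P = P_0`). -/
def Ptop {q : ℕ} (μ : Measure (Mat q)) (t : ℝ) (f : (Fin q → ℝ) → ℂ)
    (x : Fin q → ℝ) : ℂ :=
  ∫ g, Complex.exp (Complex.I * (t : ℂ) * (xi g x : ℂ)) * f (proj g x) ∂μ

/-- The sup norm `‖f‖_u` over `B̄`. -/
def supnorm {q : ℕ} (f : (Fin q → ℝ) → ℂ) : ℝ :=
  sSup {r : ℝ | ∃ x, inBbar x ∧ r = ‖f x‖}

/-- The Lipschitz seminorm `m(f)` with respect to the distance `d` on `B̄`. -/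
def mlip {q : ℕ} (f : (Fin q → ℝ) → ℂ) : ℝ :=
  sSup {r : ℝ | ∃ x y, inBbar x ∧ inBbar y ∧ x ≠ y ∧
    r = ‖f x - f y‖ / dB x y}

/-- Membership in the space `L` of `d`-Lipschitz functions on `B̄`. -/
def memL {q : ℕ} (f : (Fin q → ℝ) → ℂ) : Prop :=
  ∃ M : ℝ, ∀ x y, inBbar x → inBbar y → ‖f x - f y‖ ≤ M * dB x y

/-- The norm `‖f‖_L = ‖f‖_u + m(f)`. -/
def normL {q : ℕ} (f : (Fin q → ℝ) → ℂ) : ℝ := supnorm f + mlip f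

/-- `‖g‖ = sup { ‖gx‖ : x ∈ B̄ }`. -/
def opg {q : ℕ} (g : Mat q) : ℝ :=
  sSup {r : ℝ | ∃ x, inBbar x ∧ r = nrm (g.mulVec x)}

/-- `v(g) = inf { ‖gx‖ : x ∈ B̄ }`. -/
def vg {q : ℕ} (g : Mat q) : ℝ :=
  sInf {r : ℝ | ∃ x, inBbar x ∧ r = nrm (g.mulVec x)}

/-- `ℓ(g) = |ln ‖g‖| + |ln v(g)|`. -/
def ellg {q : ℕ} (g : Mat q) : ℝ := |Real.log (opg g)| + |Real.log (vg g)|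

/-- `ε(t) = ∫ min(|t| ℓ(g), 2) dμ(g)`. -/
def epsT {q : ℕ} (μ : Measure (Mat q)) (t : ℝ) : ℝ :=
  ∫ g, min (|t| * ellg g) 2 ∂μ

/-- The operator norm of `P_t - P` on `L`. -/
def opNormDiff {q : ℕ} (μ : Measure (Mat q)) (t : ℝ) : ℝ :=
  sSup {r : ℝ | ∃ f : (Fin q → ℝ) → ℂ, memL f ∧ normL f ≤ 1 ∧
    r = normL (fun x => Ptop μ t f x - Ptop μ 0 f x)}

section Aux

attribute [local instance] Matrix.linftyOpNormedRing Matrix.linftyOpNormedAlgebra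

variable {q : ℕ}

lemma pow_nonneg_entries {g : Mat q} (hg : ∀ i j, 0 ≤ g i j) (k : ℕ) :
    ∀ i j, 0 ≤ (g ^ k) i j := by
  induction k with
  | zero =>
    intro i j
    rw [pow_zero]
    by_cases h : i = j <;> simp [Matrix.one_apply, h]
  | succ k ih =>
    intro i j
    rw [pow_succ, Matrix.mul_apply]
    exact Finset.sum_nonneg fun l _ => mul_nonneg (ih i l) (hg l j)

lemma map_entry (g : Mat q) (i j : Fin q) :
    (g.map (algebraMap ℝ ℂ)) i j = ((g i j : ℝ) : ℂ) := rfl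

lemma rowsum_le_norm (g : Mat q) (hg : ∀ i j, 0 ≤ g i j) (i : Fin q) :
    ∑ j, g i j ≤ ‖g.map (algebraMap ℝ ℂ)‖ := by
  rw [Matrix.linfty_opNorm_def]
  have h1 : ∑ j, g i j = ((∑ j, ‖(g.map (algebraMap ℝ ℂ)) i j‖₊ : NNReal) : ℝ) := by
    push_cast
    refine Finset.sum_congr rfl fun j _ => ?_
    simp [Matrix.map_apply, Complex.norm_real, Real.norm_eq_abs, abs_of_nonneg (hg i j)]
  rw [h1]
  exact NNReal.coe_le_coe.mpr (Finset.le_sup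
    (f := fun i => ∑ j, ‖(g.map (algebraMap ℝ ℂ)) i j‖₊) (Finset.mem_univ i))

lemma norm_le_N1 (g : Mat q) (hg : ∀ i j, 0 ≤ g i j) :
    ‖g.map (algebraMap ℝ ℂ)‖ ≤ N1fun g := by
  rcases isEmpty_or_nonempty (Fin q) with hE | hE
  · rw [Matrix.linfty_opNorm_def]
    simp [N1fun]
  rw [Matrix.linfty_opNorm_def]
  obtain ⟨i₀, _, hsup⟩ := Finset.exists_mem_eq_sup (Finset.univ : Finset (Fin q))
    Finset.univ_nonempty (fun i => ∑ j, ‖(g.map (algebraMap ℝ ℂ)) i j‖₊)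
  rw [hsup]
  have h1 : ((∑ j, ‖(g.map (algebraMap ℝ ℂ)) i₀ j‖₊ : NNReal) : ℝ) = ∑ j, g i₀ j := by
    push_cast
    refine Finset.sum_congr rfl fun j _ => ?_
    simp [Matrix.map_apply, Complex.norm_real, Real.norm_eq_abs, abs_of_nonneg (hg i₀ j)]
  rw [h1]
  exact Finset.single_le_sum (f := fun i => ∑ j, g i j)
    (fun i _ => Finset.sum_nonneg fun j _ => hg i j) (Finset.mem_univ i₀)

lemma specRad_le_norm (hq : 1 ≤ q) (g : Mat q) :
    specRad g ≤ ‖g.map (algebraMap ℝ ℂ)‖ ∧ spectralRadius ℂ (g.map (algebraMap ℝ ℂ)) ≠ ⊤ := by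
  haveI : Nonempty (Fin q) := ⟨⟨0, hq⟩⟩
  have h2 := spectrum.spectralRadius_le_nnnorm (𝕜 := ℂ) (g.map (algebraMap ℝ ℂ))
  refine ⟨?_, ne_top_of_le_ne_top ENNReal.coe_ne_top h2⟩
  have := ENNReal.toReal_mono ENNReal.coe_ne_top h2
  rwa [ENNReal.coe_toReal, coe_nnnorm] at this

lemma le_specRad (hq : 1 ≤ q) (g : Mat q) (r : ℝ) (hr : 0 ≤ r)
    (h : ∀ k : ℕ, 1 ≤ k → r ^ k ≤ ‖(g.map (algebraMap ℝ ℂ)) ^ k‖) : r ≤ specRad g := by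
  haveI : Nonempty (Fin q) := ⟨⟨0, hq⟩⟩
  haveI : CompleteSpace (Matrix (Fin q) (Fin q) ℂ) := FiniteDimensional.complete ℂ _
  set Ac := g.map (algebraMap ℝ ℂ) with hAc
  have hgel := spectrum.pow_nnnorm_pow_one_div_tendsto_nhds_spectralRadius Ac
  have key : ENNReal.ofReal r ≤ spectralRadius ℂ Ac := by
    refine ge_of_tendsto hgel ?_
    filter_upwards [eventually_ge_atTop 1] with k hk
    have hk0 : (k : ℝ) ≠ 0 := Nat.cast_ne_zero.mpr (by omega)
    have h1 : ENNReal.ofReal r ^ k ≤ (‖Ac ^ k‖₊ : ENNReal) := by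
      rw [← ENNReal.ofReal_pow hr, ← enorm_eq_nnnorm, ← ofReal_norm]
      exact ENNReal.ofReal_le_ofReal (h k hk)
    calc ENNReal.ofReal r
        = ((ENNReal.ofReal r) ^ k) ^ (1 / (k : ℝ)) := by
          rw [← ENNReal.rpow_natCast (ENNReal.ofReal r) k, ← ENNReal.rpow_mul,
            mul_one_div, div_self hk0, ENNReal.rpow_one]
      _ ≤ (‖Ac ^ k‖₊ : ENNReal) ^ (1 / (k : ℝ)) :=
          ENNReal.rpow_le_rpow h1 (by positivity)
  have hne := (specRad_le_norm hq g).2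
  have := ENNReal.toReal_mono hne key
  rwa [ENNReal.toReal_ofReal hr] at this

lemma mapC_pow (g : Mat q) (k : ℕ) :
    (g.map (algebraMap ℝ ℂ)) ^ k = (g ^ k).map (algebraMap ℝ ℂ) := by
  rw [← RingHom.mapMatrix_apply, ← RingHom.mapMatrix_apply, map_pow]

lemma memS_one (hq : 1 ≤ q) : memS (1 : Mat q) := by
  refine ⟨fun i j => ?_, fun i => ⟨i, by simp⟩, fun j => ⟨j, by simp⟩⟩
  by_cases h : i = j <;> simp [Matrix.one_apply, h]

lemma memS_mul {g h : Mat q} (hg : memS g) (hh : memS h) : memS (g * h) := by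
  obtain ⟨hg0, hgr, hgc⟩ := hg
  obtain ⟨hh0, hhr, hhc⟩ := hh
  refine ⟨fun i j => ?_, fun i => ?_, fun j => ?_⟩
  · rw [Matrix.mul_apply]
    exact Finset.sum_nonneg fun l _ => mul_nonneg (hg0 i l) (hh0 l j)
  · obtain ⟨l, hl⟩ := hgr i
    obtain ⟨j, hj⟩ := hhr l
    exact ⟨j, by
      rw [Matrix.mul_apply]
      exact Finset.sum_pos' (fun m _ => mul_nonneg (hg0 i m) (hh0 m j))
        ⟨l, Finset.mem_univ l, mul_pos hl hj⟩⟩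
  · obtain ⟨l, hl⟩ := hhc j
    obtain ⟨i, hi⟩ := hgc l
    exact ⟨i, by
      rw [Matrix.mul_apply]
      exact Finset.sum_pos' (fun m _ => mul_nonneg (hg0 i m) (hh0 m j))
        ⟨l, Finset.mem_univ l, mul_pos hi hl⟩⟩

lemma specRad_pos (hq : 1 ≤ q) (g : Mat q) (hg : memS g) : 0 < specRad g := by
  haveI : Nonempty (Fin q) := ⟨⟨0, hq⟩⟩
  obtain ⟨hg0, hgr, _⟩ := hg
  set m : ℝ := Finset.univ.inf' Finset.univ_nonempty (fun i => ∑ j, g i j) with hm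
  have hmle : ∀ i, m ≤ ∑ j, g i j := fun i => Finset.inf'_le _ (Finset.mem_univ i)
  have hmpos : 0 < m := by
    obtain ⟨i₀, _, hi₀⟩ := Finset.exists_mem_eq_inf' (Finset.univ_nonempty) (fun i => ∑ j, g i j)
    rw [hm, hi₀]
    obtain ⟨j, hj⟩ := hgr i₀
    exact Finset.sum_pos' (fun l _ => hg0 i₀ l) ⟨j, Finset.mem_univ j, hj⟩
  have hrow : ∀ k : ℕ, ∀ i, m ^ (k + 1) ≤ ∑ j, (g ^ (k + 1)) i j := by
    intro k
    induction k with
    | zero => intro i; simpa using hmle i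
    | succ k ih =>
      intro i
      have hsplit : ∑ j, (g ^ (k + 2)) i j = ∑ l, g i l * ∑ j, (g ^ (k + 1)) l j :=
        calc ∑ j, (g ^ (k + 2)) i j = ∑ j, ∑ l, g i l * (g ^ (k + 1)) l j := by
              refine Finset.sum_congr rfl fun j _ => ?_
              rw [pow_succ', Matrix.mul_apply]
          _ = ∑ l, ∑ j, g i l * (g ^ (k + 1)) l j := Finset.sum_comm
          _ = ∑ l, g i l * ∑ j, (g ^ (k + 1)) l j :=
              Finset.sum_congr rfl fun l _ => (Finset.mul_sum _ _ _).symm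
      rw [hsplit]
      calc m ^ (k + 2) = m * m ^ (k + 1) := by ring
        _ ≤ (∑ l, g i l) * m ^ (k + 1) :=
            mul_le_mul_of_nonneg_right (hmle i) (by positivity)
        _ = ∑ l, g i l * m ^ (k + 1) := Finset.sum_mul _ _ _
        _ ≤ ∑ l, g i l * ∑ j, (g ^ (k + 1)) l j :=
            Finset.sum_le_sum fun l _ => mul_le_mul_of_nonneg_left (ih l) (hg0 i l)
  refine lt_of_lt_of_le hmpos (le_specRad hq g m hmpos.le fun k hk => ?_)
  obtain ⟨k', rfl⟩ := Nat.exists_eq_add_of_le hk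
  rw [mapC_pow, add_comm 1 k']
  calc m ^ (k' + 1)
      ≤ ∑ j, (g ^ (k' + 1)) (⟨0, hq⟩ : Fin q) j := hrow k' _
    _ ≤ ‖(g ^ (k' + 1)).map (algebraMap ℝ ℂ)‖ :=
        rowsum_le_norm _ (pow_nonneg_entries hg0 _) _

lemma N1_le_q_norm (g : Mat q) (hg : ∀ i j, 0 ≤ g i j) :
    N1fun g ≤ q * ‖g.map (algebraMap ℝ ℂ)‖ := by
  calc N1fun g = ∑ _i : Fin q, ∑ j, g _i j := rfl
    _ ≤ ∑ _i : Fin q, ‖g.map (algebraMap ℝ ℂ)‖ :=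
        Finset.sum_le_sum fun i _ => rowsum_le_norm g hg i
    _ = q * ‖g.map (algebraMap ℝ ℂ)‖ := by
        rw [Finset.sum_const, Finset.card_univ, Fintype.card_fin, nsmul_eq_mul]

lemma N1_nonneg (g : Mat q) (hg : ∀ i j, 0 ≤ g i j) : 0 ≤ N1fun g :=
  Finset.sum_nonneg fun i _ => Finset.sum_nonneg fun j _ => hg i j

lemma N1_mul_ge (hq : 1 ≤ q) (A B : Mat q) (c : ℝ) (hc : 0 < c)
    (hA : ∀ i j, 0 ≤ A i j) (hcomp : ∀ i j j', c * A i j' ≤ A i j)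
    (hB : ∀ i j, 0 ≤ B i j) :
    c / q * N1fun A * N1fun B ≤ N1fun (A * B) := by
  have hq0 : (0 : ℝ) < q := by exact_mod_cast hq
  have hkey : ∀ i l, c / q * (∑ m, A i m) ≤ A i l := by
    intro i l
    rw [div_mul_eq_mul_div, div_le_iff₀ hq0]
    calc c * ∑ m, A i m = ∑ m, c * A i m := Finset.mul_sum _ _ _
      _ ≤ ∑ _m : Fin q, A i l := Finset.sum_le_sum fun m _ => hcomp i l m
      _ = A i l * q := by
          rw [Finset.sum_const, Finset.card_univ, Fintype.card_fin, nsmul_eq_mul, mul_comm]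
  have hsplit : N1fun (A * B) = ∑ i, ∑ l, A i l * ∑ j, B l j :=
    calc N1fun (A * B) = ∑ i, ∑ j, ∑ l, A i l * B l j := by
          refine Finset.sum_congr rfl fun i _ => Finset.sum_congr rfl fun j _ => ?_
          rw [Matrix.mul_apply]
      _ = ∑ i, ∑ l, ∑ j, A i l * B l j :=
          Finset.sum_congr rfl fun i _ => Finset.sum_comm
      _ = ∑ i, ∑ l, A i l * ∑ j, B l j :=
          Finset.sum_congr rfl fun i _ => Finset.sum_congr rfl fun l _ =>
            (Finset.mul_sum _ _ _).symm
  have hlhs : c / q * N1fun A * N1fun B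
      = ∑ i, ∑ l, (c / q * ∑ m, A i m) * ∑ j, B l j := by
    rw [N1fun, N1fun, mul_assoc, Finset.sum_mul_sum, Finset.mul_sum]
    refine Finset.sum_congr rfl fun i _ => ?_
    rw [Finset.mul_sum]
    refine Finset.sum_congr rfl fun l _ => by ring
  rw [hsplit, hlhs]
  refine Finset.sum_le_sum fun i _ => Finset.sum_le_sum fun l _ =>
    mul_le_mul_of_nonneg_right (hkey i l) (Finset.sum_nonneg fun j _ => hB l j)

lemma N1_pow_ge (hq : 1 ≤ q) (A : Mat q) (c : ℝ) (hc : 0 < c)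
    (hA : ∀ i j, 0 ≤ A i j) (hcomp : ∀ i j j', c * A i j' ≤ A i j) :
    ∀ k : ℕ, (c / q * N1fun A) ^ k * N1fun A ≤ N1fun (A ^ (k + 1)) := by
  have hq0 : (0 : ℝ) < q := by exact_mod_cast hq
  have hcq : 0 ≤ c / q := by positivity
  have hN0 := N1_nonneg A hA
  intro k
  induction k with
  | zero => simp [pow_one]
  | succ k ih =>
    have h1 : c / q * N1fun A * N1fun (A ^ (k + 1)) ≤ N1fun (A * A ^ (k + 1)) :=
      N1_mul_ge hq A (A ^ (k + 1)) c hc hA hcomp (pow_nonneg_entries hA _)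
    calc (c / q * N1fun A) ^ (k + 1) * N1fun A
        = c / q * N1fun A * ((c / q * N1fun A) ^ k * N1fun A) := by ring
      _ ≤ c / q * N1fun A * N1fun (A ^ (k + 1)) :=
          mul_le_mul_of_nonneg_left ih (by positivity)
      _ ≤ N1fun (A * A ^ (k + 1)) := h1
      _ = N1fun (A ^ (k + 2)) := by rw [← pow_succ']

lemma specRad_ge_N1 (hq : 1 ≤ q) (A : Mat q) (c : ℝ) (hc : 0 < c) (hc1 : c ≤ 1)
    (hA : ∀ i j, 0 ≤ A i j) (hcomp : ∀ i j j', c * A i j' ≤ A i j) :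
    c / q * N1fun A ≤ specRad A := by
  have hq0 : (0 : ℝ) < q := by exact_mod_cast hq
  have hN0 := N1_nonneg A hA
  refine le_specRad hq A _ (by positivity) fun k hk => ?_
  obtain ⟨m, rfl⟩ := Nat.exists_eq_add_of_le hk
  rw [mapC_pow, add_comm 1 m]
  calc (c / q * N1fun A) ^ (m + 1)
      = c / q * ((c / q * N1fun A) ^ m * N1fun A) := by ring
    _ ≤ c / q * N1fun (A ^ (m + 1)) :=
        mul_le_mul_of_nonneg_left (N1_pow_ge hq A c hc hA hcomp m) (by positivity)
    _ ≤ c / q * (q * ‖(A ^ (m + 1)).map (algebraMap ℝ ℂ)‖) :=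
        mul_le_mul_of_nonneg_left (N1_le_q_norm _ (pow_nonneg_entries hA _)) (by positivity)
    _ = c * ‖(A ^ (m + 1)).map (algebraMap ℝ ℂ)‖ := by
        field_simp
    _ ≤ ‖(A ^ (m + 1)).map (algebraMap ℝ ℂ)‖ := by
        have := norm_nonneg ((A ^ (m + 1)).map (algebraMap ℝ ℂ))
        nlinarith

lemma specRad_le_N1 (hq : 1 ≤ q) (g : Mat q) (hg : ∀ i j, 0 ≤ g i j) :
    specRad g ≤ N1fun g :=
  (specRad_le_norm hq g).1.trans (norm_le_N1 g hg)

end Aux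

section Main

variable {q : ℕ} {Ω : Type}

lemma memS_Xprod (hq : 1 ≤ q) (X : ℕ → Ω → Mat q)
    (hS : ∀ n, 1 ≤ n → ∀ ω', memS (X n ω')) (ω : Ω) :
    ∀ n, 1 ≤ n → memS (Xprod X n ω) := by
  intro n hn
  induction n with
  | zero => omega
  | succ n ih =>
    show memS (X (n + 1) ω * Xprod X n ω)
    rcases Nat.eq_zero_or_pos n with h0 | hpos
    · subst h0
      show memS (X 1 ω * Xprod X 0 ω)
      have : Xprod X 0 ω = 1 := rfl
      rw [this, mul_one]
      exact hS 1 le_rfl ω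
    · exact memS_mul (hS (n + 1) (by omega) ω) (ih hpos)

lemma Yprod_eq_transpose (X : ℕ → Ω → Mat q) (ω : Ω) (n : ℕ) :
    Yprod X n ω = (Xprod X n ω)ᵀ := by
  induction n with
  | zero =>
    show (1 : Mat q) = (1 : Mat q)ᵀ
    rw [Matrix.transpose_one]
  | succ n ih =>
    show Yprod X n ω * (X (n + 1) ω)ᵀ = (X (n + 1) ω * Xprod X n ω)ᵀ
    rw [Matrix.transpose_mul, ih]

lemma nrm_transpose_mulVec (hq : 1 ≤ q) (A : Mat q) (hA : ∀ i j, 0 ≤ A i j) :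
    nrm (Aᵀ.mulVec (fun _ => 1 / (q : ℝ))) = N1fun A / q := by
  have hq0 : (0 : ℝ) < q := by exact_mod_cast hq
  have hentry : ∀ i, Aᵀ.mulVec (fun _ => 1 / (q : ℝ)) i = (∑ j, A j i) * (1 / q) := by
    intro i
    rw [Matrix.mulVec, dotProduct]
    rw [Finset.sum_mul]
    rfl
  rw [nrm]
  calc ∑ i, |Aᵀ.mulVec (fun _ => 1 / (q : ℝ)) i|
      = ∑ i, (∑ j, A j i) * (1 / q) := by
        refine Finset.sum_congr rfl fun i _ => ?_
        rw [hentry i, abs_of_nonneg]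
        exact mul_nonneg (Finset.sum_nonneg fun j _ => hA j i) (by positivity)
    _ = (∑ i, ∑ j, A j i) * (1 / q) := (Finset.sum_mul _ _ _).symm
    _ = N1fun A / q := by rw [Finset.sum_comm, N1fun]; ring

/-- **Lemma II.1 (iii).** If `T(ω) < ∞` then, with `χ = (1/q)·(1,…,1)`, the
quantities `D̃_n(ω) = |ln Λ_n(ω) − ln ‖Y^{(n)}(ω) χ‖|` are uniformly bounded in
`n` (and the spectral radii `Λ_n(ω)` are strictly positive). -/
theorem statement3 {q : ℕ} (hq : 1 ≤ q) {Ω : Type} (X : ℕ → Ω → Mat q)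
    (hS : ∀ n, 1 ≤ n → ∀ ω', memS (X n ω')) (ω : Ω) (hT : hitT X ω < ⊤) :
    (∀ n : ℕ, 1 ≤ n → 0 < specRad (Xprod X n ω)) ∧
    ∃ M : ℝ, ∀ n : ℕ, 1 ≤ n →
      |Real.log (specRad (Xprod X n ω))
        - Real.log (nrm ((Yprod X n ω).mulVec (fun _ => 1 / (q : ℝ))))| ≤ M := by
  haveI : Nonempty (Fin q) := ⟨⟨0, hq⟩⟩
  have hq0 : (0 : ℝ) < q := by exact_mod_cast hq
  have hmemS := memS_Xprod hq X hS ω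
  have hpos : ∀ n, 1 ≤ n → 0 < specRad (Xprod X n ω) :=
    fun n hn => specRad_pos hq _ (hmemS n hn)
  refine ⟨hpos, ?_⟩
  -- extract the hitting time
  have hex : ∃ t, 1 ≤ t ∧ memS0 (Xprod X t ω) := by
    by_contra hcon
    have htop : hitT X ω = ⊤ := by
      rw [hitT]
      simp only [iInf_eq_top]
      intro n hcond
      exact (hcon ⟨n, hcond⟩).elim
    rw [htop] at hT
    exact lt_irrefl _ hT
  obtain ⟨t, ht1, ht0⟩ := hex
  set hmat := Xprod X t ω with hhmat
  -- the comparability constant c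
  set ε : ℝ := Finset.univ.inf' Finset.univ_nonempty
    (fun p : Fin q × Fin q => hmat p.1 p.2) with hε
  set Mx : ℝ := Finset.univ.sup' Finset.univ_nonempty
    (fun p : Fin q × Fin q => hmat p.1 p.2) with hMx
  have hεle : ∀ i j, ε ≤ hmat i j := fun i j =>
    Finset.inf'_le _ (Finset.mem_univ (i, j))
  have hMle : ∀ i j, hmat i j ≤ Mx := fun i j =>
    Finset.le_sup' (f := fun p : Fin q × Fin q => hmat p.1 p.2) (Finset.mem_univ (i, j))
  have hεpos : 0 < ε := by
    obtain ⟨p, _, hp⟩ := Finset.exists_mem_eq_inf'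
      (Finset.univ_nonempty (α := Fin q × Fin q))
      (fun p : Fin q × Fin q => hmat p.1 p.2)
    rw [hε, hp]
    exact ht0 p.1 p.2
  have hMpos : 0 < Mx := lt_of_lt_of_le hεpos (le_trans (hεle ⟨0, hq⟩ ⟨0, hq⟩) (hMle _ _))
  set c : ℝ := ε / Mx with hcdef
  have hc : 0 < c := by positivity
  have hc1 : c ≤ 1 := by
    rw [hcdef, div_le_one hMpos]
    exact le_trans (hεle ⟨0, hq⟩ ⟨0, hq⟩) (hMle _ _)
  have hbase : ∀ i j j', c * hmat i j' ≤ hmat i j := by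
    intro i j j'
    have h1 : ε / Mx * hmat i j' ≤ ε / Mx * Mx :=
      mul_le_mul_of_nonneg_left (hMle i j') (by positivity)
    rw [div_mul_cancel₀ _ hMpos.ne'] at h1
    exact le_trans h1 (hεle i j)
  -- the invariant
  have inv : ∀ n, t ≤ n → (∀ i j, 0 < Xprod X n ω i j) ∧
      (∀ i j j', c * Xprod X n ω i j' ≤ Xprod X n ω i j) := by
    intro n hn
    induction n, hn using Nat.le_induction with
    | base => exact ⟨ht0, hbase⟩
    | succ n hn ih =>
      obtain ⟨ih0, ihc⟩ := ih
      obtain ⟨hX0, hXr, _⟩ := hS (n + 1) (by omega) ω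
      constructor
      · intro i j
        show 0 < (X (n + 1) ω * Xprod X n ω) i j
        rw [Matrix.mul_apply]
        obtain ⟨l, hl⟩ := hXr i
        exact Finset.sum_pos' (fun m _ => mul_nonneg (hX0 i m) (ih0 m j).le)
          ⟨l, Finset.mem_univ l, mul_pos hl (ih0 l j)⟩
      · intro i j j'
        show c * (X (n + 1) ω * Xprod X n ω) i j' ≤ (X (n + 1) ω * Xprod X n ω) i j
        rw [Matrix.mul_apply, Matrix.mul_apply, Finset.mul_sum]
        refine Finset.sum_le_sum fun l _ => ?_
        calc c * (X (n + 1) ω i l * Xprod X n ω l j')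
            = X (n + 1) ω i l * (c * Xprod X n ω l j') := by ring
          _ ≤ X (n + 1) ω i l * Xprod X n ω l j :=
              mul_le_mul_of_nonneg_left (ihc l j j') (hX0 i l)
  -- the uniform bound for n ≥ t
  have key : ∀ n, t ≤ n →
      |Real.log (specRad (Xprod X n ω))
        - Real.log (nrm ((Yprod X n ω).mulVec (fun _ => 1 / (q : ℝ))))|
        ≤ max (Real.log q) (-Real.log c) := by
    intro n hn
    obtain ⟨hA0, hAc⟩ := inv n hn
    set A := Xprod X n ω with hA
    have hAnn : ∀ i j, 0 ≤ A i j := fun i j => (hA0 i j).le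
    have hN : 0 < N1fun A :=
      Finset.sum_pos (fun i _ => Finset.sum_pos (fun j _ => hA0 i j)
        Finset.univ_nonempty) Finset.univ_nonempty
    have hYn : nrm ((Yprod X n ω).mulVec fun _ => 1 / (q : ℝ)) = N1fun A / q := by
      rw [Yprod_eq_transpose]
      exact nrm_transpose_mulVec hq A hAnn
    rw [hYn]
    have hup : specRad A ≤ N1fun A := specRad_le_N1 hq A hAnn
    have hlo : c / q * N1fun A ≤ specRad A := specRad_ge_N1 hq A c hc hc1 hAnn hAc
    have hspos : 0 < specRad A := lt_of_lt_of_le (by positivity) hlo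
    have hlogup : Real.log (specRad A) ≤ Real.log (N1fun A) :=
      Real.log_le_log hspos hup
    have hloglo : Real.log (c / q) + Real.log (N1fun A) ≤ Real.log (specRad A) := by
      rw [← Real.log_mul (by positivity) hN.ne']
      exact Real.log_le_log (by positivity) hlo
    have hlogq : Real.log (N1fun A / q) = Real.log (N1fun A) - Real.log q :=
      Real.log_div hN.ne' hq0.ne'
    have hlogcq : Real.log (c / q) = Real.log c - Real.log q :=
      Real.log_div hc.ne' hq0.ne'
    rw [hlogq, abs_le]
    constructor
    · have h2 := le_max_right (Real.log q) (-Real.log c)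
      linarith
    · have h2 := le_max_left (Real.log q) (-Real.log c)
      linarith
  -- assemble
  have hIccne : (Finset.Icc 1 t).Nonempty := ⟨1, Finset.mem_Icc.mpr ⟨le_rfl, ht1⟩⟩
  refine ⟨max (max (Real.log q) (-Real.log c))
    ((Finset.Icc 1 t).sup' hIccne (fun n =>
      |Real.log (specRad (Xprod X n ω))
        - Real.log (nrm ((Yprod X n ω).mulVec (fun _ => 1 / (q : ℝ))))|)), ?_⟩
  intro n hn
  rcases le_or_gt t n with hge | hlt
  · exact le_trans (key n hge) (le_max_left _ _)
  · have hmem : n ∈ Finset.Icc 1 t := Finset.mem_Icc.mpr ⟨hn, hlt.le⟩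
    exact le_trans (Finset.le_sup' (f := fun n =>
      |Real.log (specRad (Xprod X n ω))
        - Real.log (nrm ((Yprod X n ω).mulVec (fun _ => 1 / (q : ℝ))))|) hmem)
      (le_max_right _ _)

end Main


end StablePaper
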